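/- Let p ≥ 1, c > 0, and z_1,…,z_N ∈ ℂ. Set d_{j,k} = N^{-1} Σ_{t=1}^{N} z_t^k · conj(z_t)^j for 0 ≤ j,k ≤ p, and for σ ∈ ℝ let D̃(σ) be the (p+1)×(p+1) matrix with (j,k)-entry Σ_{m=0}^{min(j,k)} (−1)^m · C(k,m) · C(j,m) · m! · (cσ)^{2m} · d_{j−m,k−m}. Then for every v ∈ ℂ^{p+1}, the function Q_v(σ) = Σ_{j,k} D̃(σ)_{jk} v_k · conj(v_j) is a polynomial in σ with real coefficients of degree at most 2p; its coefficient of σ^{2p} equals (−1)^p · p! · c^{2p} · |v_p|²; and Q_v(0) = N^{-1} Σ_{t=1}^{N} |Σ_{k=0}^{p} v_k z_t^k|² ≥ 0. -/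

import Mathlib

open Finset

/-- Empirical conjugate moments of a finite sample `z : Fin N → ℂ`:
`d j k = N⁻¹ Σ_t z_t^k ⬝ conj(z_t)^j`. -/
noncomputable def empConjMoment {N : ℕ} (z : Fin N → ℂ) (j k : ℕ) : ℂ :=
  (N : ℂ)⁻¹ * ∑ t, (z t) ^ k * (starRingEnd ℂ) (z t) ^ j

/-- The pseudo-moment matrix `D̃(σ)` built from the empirical conjugate moments:
`(j,k)`-entry `Σ_{m=0}^{min(j,k)} (−1)^m C(k,m) C(j,m) m! (cσ)^{2m} d_{j−m,k−m}`. -/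
noncomputable def pseudoMomentMatrix (p : ℕ) {N : ℕ} (z : Fin N → ℂ) (c σ : ℝ) :
    Matrix (Fin (p + 1)) (Fin (p + 1)) ℂ :=
  fun j k => ∑ m ∈ Finset.range (min (j : ℕ) (k : ℕ) + 1),
    ((-1 : ℂ) ^ m * ((k : ℕ).choose m : ℂ) * ((j : ℕ).choose m : ℂ) * (m.factorial : ℂ)
        * ((c * σ : ℝ) : ℂ) ^ (2 * m))
      * empConjMoment z ((j : ℕ) - m) ((k : ℕ) - m)

noncomputable def wAux (p : ℕ) {N : ℕ} (z : Fin N → ℂ) (v : Fin (p + 1) → ℂ)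
    (t : Fin N) (m : ℕ) : ℂ :=
  ∑ k : Fin (p + 1), ((k : ℕ).choose m : ℂ) * v k * (z t) ^ ((k : ℕ) - m)

private lemma swap3 {α β γ M : Type*} [AddCommMonoid M] (s : Finset α) (t : Finset β)
    (u : Finset γ) (f : α → β → γ → M) :
    ∑ a ∈ s, ∑ b ∈ t, ∑ c ∈ u, f a b c = ∑ c ∈ u, ∑ a ∈ s, ∑ b ∈ t, f a b c := by
  rw [show (∑ a ∈ s, ∑ b ∈ t, ∑ c ∈ u, f a b c) = ∑ a ∈ s, ∑ c ∈ u, ∑ b ∈ t, f a b c from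
    Finset.sum_congr rfl fun _ _ => Finset.sum_comm, Finset.sum_comm]

private lemma normSq_cast (w : ℂ) : ((‖w‖ ^ 2 : ℝ) : ℂ) = (starRingEnd ℂ) w * w := by
  rw [mul_comm, Complex.mul_conj']
  norm_cast

lemma key (p : ℕ) (c : ℝ) {N : ℕ} (z : Fin N → ℂ) (v : Fin (p + 1) → ℂ) (σ : ℝ) :
    (∑ j, ∑ k, pseudoMomentMatrix p z c σ j k * v k * (starRingEnd ℂ) (v j))
    = ∑ m ∈ Finset.range (p + 1),
        ((-1 : ℂ) ^ m * (m.factorial : ℂ) * ((c * σ : ℝ) : ℂ) ^ (2 * m))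
          * ((N : ℂ)⁻¹ * ∑ t, ((‖wAux p z v t m‖ ^ 2 : ℝ) : ℂ)) := by
  have h1 : ∀ j k : Fin (p + 1), pseudoMomentMatrix p z c σ j k =
      ∑ m ∈ Finset.range (p + 1),
        ((-1 : ℂ) ^ m * ((k : ℕ).choose m : ℂ) * ((j : ℕ).choose m : ℂ) * (m.factorial : ℂ)
            * ((c * σ : ℝ) : ℂ) ^ (2 * m))
          * empConjMoment z ((j : ℕ) - m) ((k : ℕ) - m) := by
    intro j k
    unfold pseudoMomentMatrix
    apply Finset.sum_subset
    · intro x hx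
      simp only [Finset.mem_range] at *
      have := j.isLt
      omega
    · intro x hx hx'
      simp only [Finset.mem_range, not_lt] at hx'
      rcases le_or_gt x (j : ℕ) with h | h
      · have : (k : ℕ) < x := by omega
        simp [Nat.choose_eq_zero_of_lt this]
      · simp [Nat.choose_eq_zero_of_lt h]
  simp only [h1, Finset.sum_mul]
  rw [swap3]
  refine Finset.sum_congr rfl fun m hm => ?_
  have hnorm : ∀ t, ((‖wAux p z v t m‖ ^ 2 : ℝ) : ℂ)
      = (∑ j : Fin (p + 1), ((j : ℕ).choose m : ℂ) * (starRingEnd ℂ) (v j)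
            * (starRingEnd ℂ) (z t) ^ ((j : ℕ) - m))
        * (∑ k : Fin (p + 1), ((k : ℕ).choose m : ℂ) * v k * (z t) ^ ((k : ℕ) - m)) := by
    intro t
    rw [normSq_cast]
    unfold wAux
    rw [map_sum]
    congr 1
    refine Finset.sum_congr rfl fun j _ => ?_
    simp [map_mul, map_pow]
  simp only [hnorm]
  unfold empConjMoment
  simp only [Finset.mul_sum, Finset.sum_mul]
  rw [swap3]
  refine Finset.sum_congr rfl fun t _ => ?_
  rw [Finset.sum_comm]
  refine Finset.sum_congr rfl fun j _ => ?_
  refine Finset.sum_congr rfl fun k _ => ?_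
  ring

/-- for every `v ∈ ℂ^{p+1}`, the hermitian form
`Q_v(σ) = Σ_{j,k} D̃(σ)_{jk} v_k conj(v_j)` is a real polynomial in `σ` of degree at most
`2p`, with leading `σ^{2p}`-coefficient `(−1)^p p! c^{2p} |v_p|²`, and
`Q_v(0) = N⁻¹ Σ_t |Σ_k v_k z_t^k|² ≥ 0`. -/
theorem hermitianForm_of_pseudoMomentMatrix
    (p : ℕ) (hp : 1 ≤ p) (c : ℝ) (hc : 0 < c) {N : ℕ} (hN : 0 < N) (z : Fin N → ℂ)
    (v : Fin (p + 1) → ℂ) :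
    (∃ Q : Polynomial ℝ, Q.natDegree ≤ 2 * p ∧
      (∀ σ : ℝ, (∑ j, ∑ k, pseudoMomentMatrix p z c σ j k * v k * (starRingEnd ℂ) (v j))
          = ((Q.eval σ : ℝ) : ℂ)) ∧
      Q.coeff (2 * p) = (-1 : ℝ) ^ p * (p.factorial : ℝ) * c ^ (2 * p)
          * ‖v (Fin.last p)‖ ^ 2) ∧
    (∑ j, ∑ k, pseudoMomentMatrix p z c 0 j k * v k * (starRingEnd ℂ) (v j))
        = (((N : ℝ)⁻¹ * ∑ t, ‖∑ k : Fin (p + 1), v k * (z t) ^ (k : ℕ)‖ ^ 2 : ℝ) : ℂ) ∧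
    0 ≤ (N : ℝ)⁻¹ * ∑ t, ‖∑ k : Fin (p + 1), v k * (z t) ^ (k : ℕ)‖ ^ 2 := by
  set b : ℕ → ℝ := fun m =>
    (-1 : ℝ) ^ m * (m.factorial : ℝ) * c ^ (2 * m)
      * ((N : ℝ)⁻¹ * ∑ t, ‖wAux p z v t m‖ ^ 2) with hb
  have hw0 : ∀ t, wAux p z v t 0 = ∑ k : Fin (p + 1), v k * (z t) ^ (k : ℕ) := by
    intro t
    unfold wAux
    exact Finset.sum_congr rfl fun k _ => by simp
  refine ⟨⟨∑ m ∈ Finset.range (p + 1), Polynomial.C (b m) * Polynomial.X ^ (2 * m),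
      ?_, ?_, ?_⟩, ?_, ?_⟩
  · apply Polynomial.natDegree_sum_le_of_forall_le
    intro m hm
    refine le_trans (Polynomial.natDegree_C_mul_le _ _) ?_
    rw [Polynomial.natDegree_X_pow]
    simp only [Finset.mem_range] at hm
    omega
  · intro σ
    rw [key p c z v σ]
    rw [Polynomial.eval_finset_sum]
    simp only [Polynomial.eval_mul, Polynomial.eval_C, Polynomial.eval_pow, Polynomial.eval_X]
    push_cast
    refine Finset.sum_congr rfl fun m hm => ?_
    simp only [hb]
    push_cast
    ring
  · rw [Polynomial.finset_sum_coeff]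
    rw [Finset.sum_eq_single p]
    · simp only [Polynomial.coeff_C_mul, Polynomial.coeff_X_pow, if_pos rfl, mul_one, hb]
      have hwp : ∀ t, wAux p z v t p = v (Fin.last p) := by
        intro t
        unfold wAux
        rw [Finset.sum_eq_single (Fin.last p)]
        · simp
        · intro k _ hk
          have : (k : ℕ) < p := by
            have := k.isLt
            have : (k : ℕ) ≠ p := fun h => hk (Fin.ext (by simp [h]))
            omega
          simp [Nat.choose_eq_zero_of_lt this]
        · simp
      simp only [hwp]
      rw [Finset.sum_const, Finset.card_univ, Fintype.card_fin, nsmul_eq_mul]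
      rw [inv_mul_cancel_left₀ (by positivity : (N : ℝ) ≠ 0)]
      simp
    · intro m hm hmp
      simp only [Polynomial.coeff_C_mul, Polynomial.coeff_X_pow]
      rw [if_neg (by omega), mul_zero]
    · intro h
      exact absurd (Finset.mem_range.mpr (by omega)) h
  · rw [key p c z v 0]
    rw [Finset.sum_eq_single 0]
    · simp only [hw0]
      push_cast
      simp
    · intro m hm hm0
      have : c * 0 = 0 := by ring
      simp [this, zero_pow (by omega : 2 * m ≠ 0)]
    · intro h
      exact absurd (Finset.mem_range.mpr (by omega)) h
  · positivity
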